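/- If the set function f : 2^V → ℝ≥0 is monotone and (γ,β)-weakly submodular for some γ ∈ (0,1] and β ≥ 1, then every stationary point (p_1,…,p_K) of its Multinoulli Extension F over the domain ∏_{k=1}^K Δ_{n_k} satisfies F(p_1,…,p_K) ≥ (γ²/(β + β(1−γ) + γ²))·f(S) for every feasible subset S ⊆ V. -/

import Mathlib

open Finset

noncomputable section

namespace Multinoulli

variable {K : ℕ}

/-- An element of the ground set `V`: a community index `k` together with the
index `m` of the element `v_k^m` inside its community `V_k`. -/
abbrev Elem (n : Fin K → ℕ) := Σ k : Fin K, Fin (n k)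

/-- A sampling slot: a community `k` together with a trial index `b ∈ {1,…,B_k}`. -/
abbrev Slot (B : Fin K → ℕ) := Σ k : Fin K, Fin (B k)

/-- A joint outcome of all the independent multinoulli trials; `none` encodes a
draw of `∅`, which contributes no element. -/
abbrev Choice (n B : Fin K → ℕ) := ∀ s : Slot B, Option (Fin (n s.1))

/-- The probability that `Multi(p_k)` (the `k`-th block of `x`) assigns to a given
outcome: `x ⟨k,m⟩` for the element `v_k^m` and `1 - Σ_m x ⟨k,m⟩` for `∅`. -/
def prob (n : Fin K → ℕ) (x : Elem n → ℝ) (k : Fin K) : Option (Fin (n k)) → ℝ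
  | some m => x ⟨k, m⟩
  | none => 1 - ∑ m : Fin (n k), x ⟨k, m⟩

/-- The probability of the joint outcome `e` (all trials are mutually independent). -/
def jointProb (n B : Fin K → ℕ) (x : Elem n → ℝ) (e : Choice n B) : ℝ :=
  ∏ s : Slot B, prob n x s.1 (e s)

/-- The subset of the ground set selected by the trials whose slot lies in `A`
(a draw of `∅` contributes no element to the union). -/
def chosen (n B : Fin K → ℕ) (e : Choice n B) (A : Finset (Slot B)) : Finset (Elem n) :=
  A.biUnion fun s => ((e s).map fun m => (⟨s.1, m⟩ : Elem n)).toFinset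

/-- The Multinoulli Extension `F` of the set function `f`:
`F(x) = E[f(∪_{k,b} {e_k^b})]` for mutually independent `e_k^b ∼ Multi(p_k)`. -/
def ME (n B : Fin K → ℕ) (f : Finset (Elem n) → ℝ) (x : Elem n → ℝ) : ℝ :=
  ∑ e : Choice n B, f (chosen n B e Finset.univ) * jointProb n B x e

/-- The first-order partial derivative `∂G/∂x_i` at `x`. -/
def pderiv (n : Fin K → ℕ) (G : (Elem n → ℝ) → ℝ) (i : Elem n) (x : Elem n → ℝ) : ℝ :=
  deriv (fun t => G (Function.update x i t)) (x i)

/-- The gradient `∇G(x)`. -/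
def grad (n : Fin K → ℕ) (G : (Elem n → ℝ) → ℝ) (x : Elem n → ℝ) : Elem n → ℝ :=
  fun i => pderiv n G i x

/-- The second-order partial derivative `∂²G/∂x_i∂x_j` at `x`. -/
def pderiv2 (n : Fin K → ℕ) (G : (Elem n → ℝ) → ℝ) (i j : Elem n) (x : Elem n → ℝ) : ℝ :=
  pderiv n (fun y => pderiv n G j y) i x

/-- The Euclidean inner product on `∏_k ℝ^{n_k}`. -/
def inner' (n : Fin K → ℕ) (u v : Elem n → ℝ) : ℝ := ∑ i : Elem n, u i * v i

/-- Membership in the product of simplices `∏_{k=1}^K Δ_{n_k}`. -/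
def InSimplex (n : Fin K → ℕ) (x : Elem n → ℝ) : Prop :=
  (∀ i, 0 ≤ x i) ∧ ∀ k : Fin K, ∑ m : Fin (n k), x ⟨k, m⟩ ≤ 1

/-- Feasibility for the partition constraint: `|S ∩ V_k| ≤ B_k` for all `k`. -/
def Feasible (n B : Fin K → ℕ) (S : Finset (Elem n)) : Prop :=
  ∀ k : Fin K, (S.filter fun i => i.1 = k).card ≤ B k

/-- Monotonicity of a set function. -/
def MonotoneSet (n : Fin K → ℕ) (f : Finset (Elem n) → ℝ) : Prop :=
  ∀ A B : Finset (Elem n), A ⊆ B → f A ≤ f B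

/-- The marginal contribution `f(v|A) = f(A ∪ {v}) - f(A)`. -/
def marg (n : Fin K → ℕ) (f : Finset (Elem n) → ℝ) (v : Elem n) (A : Finset (Elem n)) : ℝ :=
  f (insert v A) - f A

/-- `α`-weak DR-submodularity: `f(v|A) ≥ α·f(v|B)` for all `A ⊆ B` and `v ∉ B`. -/
def WeaklyDR (n : Fin K → ℕ) (f : Finset (Elem n) → ℝ) (α : ℝ) : Prop :=
  ∀ A B : Finset (Elem n), A ⊆ B → ∀ v, v ∉ B → α * marg n f v B ≤ marg n f v A

/-- `γ`-weak submodularity from below. -/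
def WeaklyBelow (n : Fin K → ℕ) (f : Finset (Elem n) → ℝ) (γ : ℝ) : Prop :=
  ∀ A B : Finset (Elem n), A ⊆ B → γ * (f B - f A) ≤ ∑ v ∈ B \ A, marg n f v A

/-- `β`-weak submodularity from above. -/
def WeaklyAbove (n : Fin K → ℕ) (f : Finset (Elem n) → ℝ) (β : ℝ) : Prop :=
  ∀ A B : Finset (Elem n), A ⊆ B → ∑ v ∈ B \ A, marg n f v (B.erase v) ≤ β * (f B - f A)

/-- The scaled indicator vector `Σ_{k=1}^K (1/B_k)·1_{S∩V_k}`. -/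
def indVec (n B : Fin K → ℕ) (S : Finset (Elem n)) : Elem n → ℝ :=
  fun i => if i ∈ S then ((B i.1 : ℝ))⁻¹ else 0

-- ## auxiliary

def Rm (n B : Fin K → ℕ) (e : Choice n B) (s : Slot B) : Finset (Elem n) :=
  chosen n B e (Finset.univ.erase s)

def Qp (n B : Fin K → ℕ) (x : Elem n → ℝ) (e : Choice n B) (s : Slot B) : ℝ :=
  ∏ s' ∈ Finset.univ.erase s, prob n x s'.1 (e s')

lemma chosen_congr (n B : Fin K → ℕ) (e e' : Choice n B) (A : Finset (Slot B))
    (h : ∀ s ∈ A, e s = e' s) : chosen n B e A = chosen n B e' A := by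
  unfold chosen
  apply Finset.biUnion_congr rfl
  intro s hs; rw [h s hs]

lemma chosen_univ_eq (n B : Fin K → ℕ) (e : Choice n B) (s : Slot B) :
    chosen n B e Finset.univ
      = ((e s).map fun m => (⟨s.1, m⟩ : Elem n)).toFinset ∪ Rm n B e s := by
  conv_lhs => rw [show (Finset.univ : Finset (Slot B)) = insert s (Finset.univ.erase s) from
    (Finset.insert_erase (Finset.mem_univ s)).symm]
  unfold chosen Rm chosen
  rw [Finset.biUnion_insert]

lemma jointProb_eq (n B : Fin K → ℕ) (x : Elem n → ℝ) (e : Choice n B) (s : Slot B) :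
    jointProb n B x e = prob n x s.1 (e s) * Qp n B x e s :=
  (Finset.mul_prod_erase Finset.univ _ (Finset.mem_univ s)).symm

lemma sum_prob (n : Fin K → ℕ) (x : Elem n → ℝ) (k : Fin K) :
    ∑ o : Option (Fin (n k)), prob n x k o = 1 := by
  rw [Fintype.sum_option]
  simp [prob]

lemma prob_nonneg (n : Fin K → ℕ) (x : Elem n → ℝ) (hx0 : ∀ i, 0 ≤ x i)
    (hx1 : ∀ k : Fin K, ∑ m : Fin (n k), x ⟨k, m⟩ ≤ 1) (k : Fin K)
    (o : Option (Fin (n k))) : 0 ≤ prob n x k o := by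
  cases o with
  | none => simp only [prob]; linarith [hx1 k]
  | some m => exact hx0 _

lemma jointProb_nonneg (n B : Fin K → ℕ) (x : Elem n → ℝ) (hx0 : ∀ i, 0 ≤ x i)
    (hx1 : ∀ k : Fin K, ∑ m : Fin (n k), x ⟨k, m⟩ ≤ 1) (e : Choice n B) :
    0 ≤ jointProb n B x e :=
  Finset.prod_nonneg fun s _ => prob_nonneg n x hx0 hx1 s.1 (e s)

lemma sum_jointProb (n B : Fin K → ℕ) (x : Elem n → ℝ) :
    ∑ e : Choice n B, jointProb n B x e = 1 := by
  unfold jointProb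
  calc ∑ e : Choice n B, ∏ s : Slot B, prob n x s.1 (e s)
      = ∑ e ∈ Fintype.piFinset (fun s : Slot B => (Finset.univ : Finset (Option (Fin (n s.1))))),
          ∏ s : Slot B, prob n x s.1 (e s) := by rw [Fintype.piFinset_univ]
    _ = ∏ s : Slot B, ∑ o ∈ (Finset.univ : Finset (Option (Fin (n s.1)))), prob n x s.1 o :=
        (Finset.prod_univ_sum (fun s : Slot B => (Finset.univ : Finset (Option (Fin (n s.1)))))
          (fun s o => prob n x s.1 o)).symm
    _ = 1 := Finset.prod_eq_one fun s _ => sum_prob n x s.1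

-- splitting sums over Choice at a slot
def Esp (n B : Fin K → ℕ) (s : Slot B) (o : Option (Fin (n s.1)))
    (r : ∀ j : {j : Slot B // j ≠ s}, Option (Fin (n j.1.1))) : Choice n B :=
  (Equiv.piSplitAt s fun j : Slot B => Option (Fin (n j.1))).symm (o, r)

lemma sum_choice_split (n B : Fin K → ℕ) (s : Slot B) (G : Choice n B → ℝ) :
    ∑ e : Choice n B, G e
      = ∑ r : (∀ j : {j : Slot B // j ≠ s}, Option (Fin (n j.1.1))),
          ∑ o : Option (Fin (n s.1)), G (Esp n B s o r) := by
  rw [← Equiv.sum_comp (Equiv.piSplitAt s fun j : Slot B => Option (Fin (n j.1))).symm G]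
  rw [Fintype.sum_prod_type, Finset.sum_comm]
  rfl

lemma split_apply_self (n B : Fin K → ℕ) (s : Slot B) (o : Option (Fin (n s.1)))
    (r : ∀ j : {j : Slot B // j ≠ s}, Option (Fin (n j.1.1))) :
    Esp n B s o r s = o := by
  simp [Esp, Equiv.piSplitAt]

lemma split_apply_ne (n B : Fin K → ℕ) (s : Slot B) (o : Option (Fin (n s.1)))
    (r : ∀ j : {j : Slot B // j ≠ s}, Option (Fin (n j.1.1))) (j : Slot B) (hj : j ≠ s) :
    Esp n B s o r j = r ⟨j, hj⟩ := by
  simp [Esp, Equiv.piSplitAt, hj]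

lemma Rm_split (n B : Fin K → ℕ) (s : Slot B) (o : Option (Fin (n s.1)))
    (r : ∀ j : {j : Slot B // j ≠ s}, Option (Fin (n j.1.1))) :
    Rm n B (Esp n B s o r) s = Rm n B (Esp n B s none r) s :=
  chosen_congr n B _ _ _ fun j hj => by
    have hjs : j ≠ s := Finset.ne_of_mem_erase hj
    rw [split_apply_ne n B s o r j hjs, split_apply_ne n B s none r j hjs]

lemma Qp_split (n B : Fin K → ℕ) (x : Elem n → ℝ) (s : Slot B) (o : Option (Fin (n s.1)))
    (r : ∀ j : {j : Slot B // j ≠ s}, Option (Fin (n j.1.1))) :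
    Qp n B x (Esp n B s o r) s = Qp n B x (Esp n B s none r) s :=
  Finset.prod_congr rfl fun j hj => by
    have hjs : j ≠ s := Finset.ne_of_mem_erase hj
    rw [split_apply_ne n B s o r j hjs, split_apply_ne n B s none r j hjs]

lemma sum_marg (n B : Fin K → ℕ) (x : Elem n → ℝ) (s : Slot B)
    (w : Option (Fin (n s.1)) → ℝ) (H : Option (Fin (n s.1)) → Finset (Elem n) → ℝ) :
    ∑ e : Choice n B, w (e s) * (Qp n B x e s * H (e s) (Rm n B e s))
      = ∑ e : Choice n B, jointProb n B x e * ∑ o : Option (Fin (n s.1)), w o * H o (Rm n B e s) := by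
  rw [sum_choice_split n B s (fun e => w (e s) * (Qp n B x e s * H (e s) (Rm n B e s))),
      sum_choice_split n B s
        (fun e => jointProb n B x e * ∑ o : Option (Fin (n s.1)), w o * H o (Rm n B e s))]
  refine Finset.sum_congr rfl fun r _ => ?_
  have hL : ∀ o : Option (Fin (n s.1)),
      w (Esp n B s o r s) * (Qp n B x (Esp n B s o r) s * H (Esp n B s o r s) (Rm n B (Esp n B s o r) s))
        = w o * (Qp n B x (Esp n B s none r) s * H o (Rm n B (Esp n B s none r) s)) := by
    intro o
    rw [split_apply_self, Qp_split, Rm_split]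
  have hR : ∀ o : Option (Fin (n s.1)),
      jointProb n B x (Esp n B s o r)
          * ∑ o' : Option (Fin (n s.1)), w o' * H o' (Rm n B (Esp n B s o r) s)
        = prob n x s.1 o * (Qp n B x (Esp n B s none r) s
          * ∑ o' : Option (Fin (n s.1)), w o' * H o' (Rm n B (Esp n B s none r) s)) := by
    intro o
    rw [jointProb_eq n B x _ s, split_apply_self, Qp_split, Rm_split, mul_assoc]
  rw [Finset.sum_congr rfl fun o _ => hL o, Finset.sum_congr rfl fun o _ => hR o,
      ← Finset.sum_mul, sum_prob, one_mul, Finset.mul_sum]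
  exact Finset.sum_congr rfl fun o _ => by ring

def dc (n : Fin K → ℕ) (i : Elem n) (k : Fin K) : Option (Fin (n k)) → ℝ
  | some m => if (⟨k, m⟩ : Elem n) = i then 1 else 0
  | none => if k = i.1 then -1 else 0

lemma sum_ind (n : Fin K → ℕ) (i : Elem n) (k : Fin K) :
    ∑ m : Fin (n k), (if (⟨k, m⟩ : Elem n) = i then (1:ℝ) else 0)
      = if k = i.1 then 1 else 0 := by
  obtain ⟨ik, im⟩ := i
  by_cases h : k = ik
  · subst h
    rw [if_pos rfl]
    have hc : ∀ m : Fin (n k), ((⟨k, m⟩ : Elem n) = (⟨k, im⟩ : Elem n)) = (m = im) := by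
      intro m; simp [Sigma.mk.inj_iff]
    simp_rw [hc]
    simp
  · rw [if_neg h]
    apply Finset.sum_eq_zero
    intro m _
    rw [if_neg]
    intro hc
    exact h (congrArg Sigma.fst hc)

lemma hasDerivAt_prob (n : Fin K → ℕ) (x : Elem n → ℝ) (i : Elem n) (k : Fin K)
    (o : Option (Fin (n k))) (t : ℝ) :
    HasDerivAt (fun t => prob n (Function.update x i t) k o) (dc n i k o) t := by
  cases o with
  | some m =>
    by_cases h : (⟨k, m⟩ : Elem n) = i
    · have hf : (fun t => prob n (Function.update x i t) k (some m)) = fun t => t := by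
        funext u
        show Function.update x i u ⟨k, m⟩ = u
        rw [h, Function.update_self]
      rw [hf]
      have : dc n i k (some m) = 1 := by simp [dc, h]
      rw [this]
      exact hasDerivAt_id t
    · have hf : (fun t => prob n (Function.update x i t) k (some m))
          = fun _ => x ⟨k, m⟩ := by
        funext u
        show Function.update x i u ⟨k, m⟩ = x ⟨k, m⟩
        rw [Function.update_of_ne h]
      rw [hf]
      have : dc n i k (some m) = 0 := by simp [dc, h]
      rw [this]
      exact hasDerivAt_const t _
  | none =>
    have hsum : HasDerivAt (fun t => ∑ m : Fin (n k), Function.update x i t ⟨k, m⟩)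
        (if k = i.1 then 1 else 0) t := by
      rw [← sum_ind n i k]
      apply HasDerivAt.fun_sum
      intro m _
      by_cases h : (⟨k, m⟩ : Elem n) = i
      · have hf : (fun t => Function.update x i t ⟨k, m⟩) = fun t => t := by
          funext u; rw [h, Function.update_self]
        rw [hf, if_pos h]
        exact hasDerivAt_id t
      · have hf : (fun t => Function.update x i t ⟨k, m⟩) = fun _ => x ⟨k, m⟩ := by
          funext u; rw [Function.update_of_ne h]
        rw [hf, if_neg h]
        exact hasDerivAt_const t _
    have h2 := hsum.const_sub 1
    have hval : dc n i k none = -(if k = i.1 then 1 else 0) := by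
      by_cases h : k = i.1 <;> simp [dc, h]
    rw [hval]
    exact h2


lemma hasDerivAt_jointProb (n B : Fin K → ℕ) (x : Elem n → ℝ) (i : Elem n) (e : Choice n B) :
    HasDerivAt (fun t => jointProb n B (Function.update x i t) e)
      (∑ s : Slot B, Qp n B x e s * dc n i s.1 (e s)) (x i) := by
  have h := HasDerivAt.fun_finsetProd (u := (Finset.univ : Finset (Slot B)))
      (f := fun (s : Slot B) (t : ℝ) => prob n (Function.update x i t) s.1 (e s))
      (f' := fun s => dc n i s.1 (e s)) (x := x i)
      (fun s _ => hasDerivAt_prob n x i s.1 (e s) (x i))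
  simp only [Function.update_eq_self, smul_eq_mul] at h
  exact h

lemma hasDerivAt_ME (n B : Fin K → ℕ) (f : Finset (Elem n) → ℝ) (x : Elem n → ℝ) (i : Elem n) :
    HasDerivAt (fun t => ME n B f (Function.update x i t))
      (∑ e : Choice n B, f (chosen n B e Finset.univ)
        * ∑ s : Slot B, Qp n B x e s * dc n i s.1 (e s)) (x i) := by
  apply HasDerivAt.fun_sum
  intro e _
  exact (hasDerivAt_jointProb n B x i e).const_mul _

lemma pderiv_ME (n B : Fin K → ℕ) (f : Finset (Elem n) → ℝ) (x : Elem n → ℝ) (i : Elem n) :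
    pderiv n (ME n B f) i x
      = ∑ e : Choice n B, f (chosen n B e Finset.univ)
          * ∑ s : Slot B, Qp n B x e s * dc n i s.1 (e s) :=
  (hasDerivAt_ME n B f x i).deriv

/-- `∑_e jp(e) (f(R_s ∪ i) - f(R_s))` -/
def Ts (n B : Fin K → ℕ) (f : Finset (Elem n) → ℝ) (x : Elem n → ℝ)
    (i : Elem n) (s : Slot B) : ℝ :=
  ∑ e : Choice n B, jointProb n B x e * (f (insert i (Rm n B e s)) - f (Rm n B e s))

lemma dc_sum_eval (n : Fin K → ℕ) (f : Finset (Elem n) → ℝ) (k : Fin K) (i : Elem n)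
    (h : k = i.1) (T : Finset (Elem n)) :
    ∑ o : Option (Fin (n k)), dc n i k o * f ((o.map fun m => (⟨k, m⟩ : Elem n)).toFinset ∪ T)
      = f (insert i T) - f T := by
  obtain ⟨ik, im⟩ := i
  have h' : k = ik := h
  subst h'
  rw [Fintype.sum_option]
  have hnone : dc n (⟨k, im⟩ : Elem n) k none
      * f (((none : Option (Fin (n k))).map fun m => (⟨k, m⟩ : Elem n)).toFinset ∪ T)
      = -f T := by
    simp [dc]
  rw [hnone]
  have hsome : ∀ m : Fin (n k),
      dc n (⟨k, im⟩ : Elem n) k (some m)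
        * f (((some m).map fun m => (⟨k, m⟩ : Elem n)).toFinset ∪ T)
      = if m = im then f (insert (⟨k, m⟩ : Elem n) T) else 0 := by
    intro m
    have hc : ((⟨k, m⟩ : Elem n) = (⟨k, im⟩ : Elem n)) = (m = im) := by
      simp [Sigma.mk.inj_iff]
    simp only [dc, hc, Option.map_some, Option.toFinset_some, ← Finset.insert_eq]
    by_cases hm : m = im <;> simp [hm]
  rw [Finset.sum_congr rfl fun m _ => hsome m]
  have : ∑ m : Fin (n k), (if m = im then f (insert (⟨k, m⟩ : Elem n) T) else 0)
      = f (insert (⟨k, im⟩ : Elem n) T) := by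
    rw [Finset.sum_ite_eq' Finset.univ im (fun m => f (insert (⟨k, m⟩ : Elem n) T))]
    simp
  rw [this]
  ring

lemma dc_sum_eval_ne (n : Fin K → ℕ) (f : Finset (Elem n) → ℝ) (k : Fin K) (i : Elem n)
    (h : ¬(k = i.1)) (T : Finset (Elem n)) :
    ∑ o : Option (Fin (n k)), dc n i k o * f ((o.map fun m => (⟨k, m⟩ : Elem n)).toFinset ∪ T)
      = 0 := by
  apply Finset.sum_eq_zero
  intro o _
  cases o with
  | none => simp [dc, h]
  | some m =>
    have : ¬((⟨k, m⟩ : Elem n) = i) := fun hc => h (by rw [← hc])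
    simp [dc, this]

lemma pderiv_ME_eq (n B : Fin K → ℕ) (f : Finset (Elem n) → ℝ) (x : Elem n → ℝ) (i : Elem n) :
    pderiv n (ME n B f) i x
      = ∑ s ∈ Finset.univ.filter (fun s : Slot B => s.1 = i.1), Ts n B f x i s := by
  rw [pderiv_ME n B f x i]
  have step1 : ∑ e : Choice n B, f (chosen n B e Finset.univ)
        * ∑ s : Slot B, Qp n B x e s * dc n i s.1 (e s)
      = ∑ s : Slot B, ∑ e : Choice n B,
          dc n i s.1 (e s) * (Qp n B x e s
            * f (((e s).map fun m => (⟨s.1, m⟩ : Elem n)).toFinset ∪ Rm n B e s)) := by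
    have e1 : ∀ e : Choice n B, f (chosen n B e Finset.univ)
          * ∑ s : Slot B, Qp n B x e s * dc n i s.1 (e s)
        = ∑ s : Slot B, dc n i s.1 (e s) * (Qp n B x e s
            * f (((e s).map fun m => (⟨s.1, m⟩ : Elem n)).toFinset ∪ Rm n B e s)) := by
      intro e
      rw [Finset.mul_sum]
      refine Finset.sum_congr rfl fun s _ => ?_
      rw [← chosen_univ_eq n B e s]
      ring
    rw [Finset.sum_congr rfl fun e _ => e1 e, Finset.sum_comm]
  rw [step1]
  have step2 : ∀ s : Slot B, ∑ e : Choice n B,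
        dc n i s.1 (e s) * (Qp n B x e s
          * f (((e s).map fun m => (⟨s.1, m⟩ : Elem n)).toFinset ∪ Rm n B e s))
      = if s.1 = i.1 then Ts n B f x i s else 0 := by
    intro s
    rw [sum_marg n B x s (fun o => dc n i s.1 o)
      (fun o T => f ((o.map fun m => (⟨s.1, m⟩ : Elem n)).toFinset ∪ T))]
    by_cases h : s.1 = i.1
    · rw [if_pos h]
      unfold Ts
      refine Finset.sum_congr rfl fun e _ => ?_
      rw [dc_sum_eval n f s.1 i h (Rm n B e s)]
    · rw [if_neg h]
      apply Finset.sum_eq_zero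
      intro e _
      rw [dc_sum_eval_ne n f s.1 i h (Rm n B e s), mul_zero]
  rw [Finset.sum_congr rfl fun s _ => step2 s, ← Finset.sum_filter]

def CuF (n B : Fin K → ℕ) (f : Finset (Elem n) → ℝ) (e : Choice n B) : ℝ :=
  ∑ s : Slot B, (f (chosen n B e Finset.univ) - f (Rm n B e s))

def YeF (n B : Fin K → ℕ) (f : Finset (Elem n) → ℝ) (S : Finset (Elem n))
    (e : Choice n B) : ℝ :=
  ∑ i ∈ S, (B i.1 : ℝ)⁻¹ * ∑ s ∈ Finset.univ.filter (fun s : Slot B => s.1 = i.1),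
    (f (insert i (Rm n B e s)) - f (Rm n B e s))

lemma sum_filter_fst (n : Fin K → ℕ) (k : Fin K) (g : Elem n → ℝ) :
    ∑ i ∈ Finset.univ.filter (fun i : Elem n => i.1 = k), g i = ∑ m : Fin (n k), g ⟨k, m⟩ := by
  rw [Finset.sum_filter, ← Finset.univ_sigma_univ, Finset.sum_sigma]
  have h1 : ∀ k' : Fin K,
      ∑ m : Fin (n k'), (if (⟨k', m⟩ : Elem n).1 = k then g ⟨k', m⟩ else 0)
        = if k' = k then ∑ m : Fin (n k'), g ⟨k', m⟩ else 0 := by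
    intro k'
    by_cases h : k' = k
    · subst h; simp
    · simp [h]
  rw [Finset.sum_congr rfl fun k' _ => h1 k',
    Finset.sum_ite_eq' Finset.univ k (fun k' => ∑ m : Fin (n k'), g ⟨k', m⟩)]
  simp

lemma xgrad_eq (n B : Fin K → ℕ) (f : Finset (Elem n) → ℝ) (x : Elem n → ℝ) :
    ∑ i : Elem n, x i * pderiv n (ME n B f) i x
      = ∑ e : Choice n B, jointProb n B x e * CuF n B f e := by
  have h1 : ∀ i : Elem n, x i * pderiv n (ME n B f) i x
      = ∑ s : Slot B, (if s.1 = i.1 then x i * Ts n B f x i s else 0) := by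
    intro i
    rw [pderiv_ME_eq, Finset.mul_sum, ← Finset.sum_filter]
  rw [Finset.sum_congr rfl fun i _ => h1 i, Finset.sum_comm]
  have h2 : ∀ s : Slot B,
      ∑ i : Elem n, (if s.1 = i.1 then x i * Ts n B f x i s else 0)
        = ∑ e : Choice n B, jointProb n B x e
            * (f (chosen n B e Finset.univ) - f (Rm n B e s)) := by
    intro s
    have hflip : ∀ i : Elem n, (if s.1 = i.1 then x i * Ts n B f x i s else 0)
        = (if i.1 = s.1 then x i * Ts n B f x i s else 0) := by
      intro i; by_cases h : s.1 = i.1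
      · rw [if_pos h, if_pos h.symm]
      · rw [if_neg h, if_neg fun hc => h hc.symm]
    rw [Finset.sum_congr rfl fun i _ => hflip i, ← Finset.sum_filter,
      sum_filter_fst n s.1 (fun i => x i * Ts n B f x i s)]
    -- RHS via marginalization
    have hR : ∑ e : Choice n B, jointProb n B x e
          * (f (chosen n B e Finset.univ) - f (Rm n B e s))
        = ∑ e : Choice n B, jointProb n B x e
            * ∑ o : Option (Fin (n s.1)), prob n x s.1 o
              * (f ((o.map fun m => (⟨s.1, m⟩ : Elem n)).toFinset ∪ Rm n B e s)
                  - f (Rm n B e s)) := by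
      rw [← sum_marg n B x s (fun o => prob n x s.1 o)
        (fun o T => f ((o.map fun m => (⟨s.1, m⟩ : Elem n)).toFinset ∪ T) - f T)]
      refine Finset.sum_congr rfl fun e _ => ?_
      rw [jointProb_eq n B x e s, ← chosen_univ_eq n B e s]
      ring
    rw [hR]
    have hpt : ∀ T : Finset (Elem n),
        ∑ o : Option (Fin (n s.1)), prob n x s.1 o
          * (f ((o.map fun m => (⟨s.1, m⟩ : Elem n)).toFinset ∪ T) - f T)
        = ∑ m : Fin (n s.1), x ⟨s.1, m⟩ * (f (insert (⟨s.1, m⟩ : Elem n) T) - f T) := by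
      intro T
      rw [Fintype.sum_option]
      simp [prob, ← Finset.insert_eq]
    -- now both sides are sums over e / over m ; swap on the Ts side
    unfold Ts
    have hswap : ∑ m : Fin (n s.1), x ⟨s.1, m⟩
          * ∑ e : Choice n B, jointProb n B x e
              * (f (insert (⟨s.1, m⟩ : Elem n) (Rm n B e s)) - f (Rm n B e s))
        = ∑ e : Choice n B, jointProb n B x e
            * ∑ m : Fin (n s.1), x ⟨s.1, m⟩
              * (f (insert (⟨s.1, m⟩ : Elem n) (Rm n B e s)) - f (Rm n B e s)) := by
      rw [Finset.sum_congr rfl fun m (_ : m ∈ Finset.univ) => Finset.mul_sum _ _ _,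
        Finset.sum_comm]
      refine Finset.sum_congr rfl fun e _ => ?_
      rw [Finset.mul_sum]
      exact Finset.sum_congr rfl fun m _ => by ring
    rw [hswap]
    exact Finset.sum_congr rfl fun e _ => by rw [hpt (Rm n B e s)]
  rw [Finset.sum_congr rfl fun s _ => h2 s, Finset.sum_comm]
  unfold CuF
  exact Finset.sum_congr rfl fun e _ => (Finset.mul_sum _ _ _).symm

lemma ygrad_eq (n B : Fin K → ℕ) (f : Finset (Elem n) → ℝ) (x : Elem n → ℝ)
    (S : Finset (Elem n)) :
    ∑ i : Elem n, indVec n B S i * pderiv n (ME n B f) i x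
      = ∑ e : Choice n B, jointProb n B x e * YeF n B f S e := by
  have h1 : ∀ i : Elem n, indVec n B S i * pderiv n (ME n B f) i x
      = if i ∈ S then (B i.1 : ℝ)⁻¹ * pderiv n (ME n B f) i x else 0 := by
    intro i; unfold indVec
    by_cases h : i ∈ S <;> simp [h]
  rw [Finset.sum_congr rfl fun i _ => h1 i, ← Finset.sum_filter, Finset.filter_univ_mem]
  have h2 : ∀ i : Elem n, (B i.1 : ℝ)⁻¹ * pderiv n (ME n B f) i x
      = ∑ e : Choice n B, jointProb n B x e
          * ((B i.1 : ℝ)⁻¹ * ∑ s ∈ Finset.univ.filter (fun s : Slot B => s.1 = i.1),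
              (f (insert i (Rm n B e s)) - f (Rm n B e s))) := by
    intro i
    rw [pderiv_ME_eq]
    unfold Ts
    rw [Finset.sum_comm, Finset.mul_sum]
    refine Finset.sum_congr rfl fun e _ => ?_
    rw [← Finset.mul_sum, Finset.mul_sum]
    have : ∑ s ∈ Finset.univ.filter (fun s : Slot B => s.1 = i.1),
        jointProb n B x e * (f (insert i (Rm n B e s)) - f (Rm n B e s))
        = jointProb n B x e * ∑ s ∈ Finset.univ.filter (fun s : Slot B => s.1 = i.1),
            (f (insert i (Rm n B e s)) - f (Rm n B e s)) := (Finset.mul_sum _ _ _).symm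
    rw [this]
    ring
  rw [Finset.sum_congr rfl fun i _ => h2 i, Finset.sum_comm]
  unfold YeF
  exact Finset.sum_congr rfl fun e _ => (Finset.mul_sum _ _ _).symm

lemma Rm_subset (n B : Fin K → ℕ) (e : Choice n B) (s : Slot B) :
    Rm n B e s ⊆ chosen n B e Finset.univ :=
  Finset.biUnion_subset_biUnion_of_subset_left _ (Finset.erase_subset _ _)

lemma mem_Rm (n B : Fin K → ℕ) (e : Choice n B) (s s' : Slot B) (hne : s' ≠ s)
    (m : Fin (n s'.1)) (hm : e s' = some m) : (⟨s'.1, m⟩ : Elem n) ∈ Rm n B e s := by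
  unfold Rm chosen
  rw [Finset.mem_biUnion]
  exact ⟨s', Finset.mem_erase.2 ⟨hne, Finset.mem_univ s'⟩, by rw [hm]; simp⟩

lemma Rm_cases (n B : Fin K → ℕ) (e : Choice n B) (s : Slot B) :
    chosen n B e Finset.univ = Rm n B e s ∨
      ∃ m : Fin (n s.1), e s = some m ∧ (⟨s.1, m⟩ : Elem n) ∉ Rm n B e s ∧
        chosen n B e Finset.univ = insert (⟨s.1, m⟩ : Elem n) (Rm n B e s) := by
  rcases h : e s with _ | m
  · left; rw [chosen_univ_eq n B e s, h]; simp
  · by_cases hm : (⟨s.1, m⟩ : Elem n) ∈ Rm n B e s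
    · left
      rw [chosen_univ_eq n B e s, h]
      simp only [Option.map_some, Option.toFinset_some, ← Finset.insert_eq]
      exact Finset.insert_eq_self.2 hm
    · right
      refine ⟨m, rfl, hm, ?_⟩
      rw [chosen_univ_eq n B e s, h]
      simp only [Option.map_some, Option.toFinset_some, ← Finset.insert_eq]

lemma CuF_term_nonneg (n B : Fin K → ℕ) (f : Finset (Elem n) → ℝ) (hmono : MonotoneSet n f)
    (e : Choice n B) (s : Slot B) : 0 ≤ f (chosen n B e Finset.univ) - f (Rm n B e s) :=
  sub_nonneg.2 (hmono _ _ (Rm_subset n B e s))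

lemma CuF_le (n B : Fin K → ℕ) (hn : ∀ k, 1 ≤ n k) (f : Finset (Elem n) → ℝ)
    (hf0 : ∀ S, 0 ≤ f S) (hmono : MonotoneSet n f) (β : ℝ) (hβ : 1 ≤ β)
    (habove : WeaklyAbove n f β) (e : Choice n B) :
    CuF n B f e ≤ β * f (chosen n B e Finset.univ) := by
  classical
  set R := chosen n B e Finset.univ with hR
  set T : Finset (Slot B) := Finset.univ.filter
    (fun s => ∃ m : Fin (n s.1), e s = some m ∧ (⟨s.1, m⟩ : Elem n) ∉ Rm n B e s) with hT
  set vOf : Slot B → Elem n := fun s => ⟨s.1, ((e s).getD ⟨0, hn s.1⟩ : Fin (n s.1))⟩ with hvOf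
  have hvOf_eq : ∀ s : Slot B, ∀ m : Fin (n s.1), e s = some m → vOf s = ⟨s.1, m⟩ := by
    intro s m hm; rw [hvOf]; simp [hm]
  have hTprop : ∀ s ∈ T, ∃ m : Fin (n s.1), e s = some m
      ∧ vOf s ∉ Rm n B e s ∧ R = insert (vOf s) (Rm n B e s) := by
    intro s hs
    obtain ⟨m, hm, hnot⟩ := (Finset.mem_filter.1 hs).2
    refine ⟨m, hm, ?_, ?_⟩
    · rw [hvOf_eq s m hm]; exact hnot
    · rw [hvOf_eq s m hm, hR, chosen_univ_eq n B e s, hm]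
      simp only [Option.map_some, Option.toFinset_some, ← Finset.insert_eq]
  have hzero : ∀ s ∈ (Finset.univ : Finset (Slot B)), s ∉ T → f R - f (Rm n B e s) = 0 := by
    intro s _ hs
    rcases Rm_cases n B e s with hc | ⟨m, hm, hnot, _⟩
    · rw [← hc]; ring
    · exact absurd (Finset.mem_filter.2 ⟨Finset.mem_univ s, ⟨m, hm, hnot⟩⟩) hs
  have hCuT : CuF n B f e = ∑ s ∈ T, (f R - f (Rm n B e s)) := by
    unfold CuF
    exact (Finset.sum_subset (Finset.filter_subset _ _) hzero).symm
  have hinj : ∀ s₁ ∈ T, ∀ s₂ ∈ T, vOf s₁ = vOf s₂ → s₁ = s₂ := by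
    intro s₁ hs₁ s₂ hs₂ hv
    by_contra hne
    obtain ⟨m₁, hm₁, hnot₁, _⟩ := hTprop s₁ hs₁
    obtain ⟨m₂, hm₂, _, _⟩ := hTprop s₂ hs₂
    apply hnot₁
    rw [hv, hvOf_eq s₂ _ hm₂]
    exact mem_Rm n B e s₁ s₂ (fun hc => hne hc.symm) _ hm₂
  have hRmT : ∀ s ∈ T, Rm n B e s = R.erase (vOf s) := by
    intro s hs
    obtain ⟨_, _, hnot, heq⟩ := hTprop s hs
    rw [heq, Finset.erase_insert hnot]
  set W : Finset (Elem n) := T.image vOf with hW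
  have hWR : W ⊆ R := by
    intro v hv
    obtain ⟨s, hs, rfl⟩ := Finset.mem_image.1 hv
    obtain ⟨_, _, _, heq⟩ := hTprop s hs
    rw [heq]; exact Finset.mem_insert_self _ _
  have hCuW : CuF n B f e = ∑ v ∈ W, (f R - f (R.erase v)) := by
    rw [hCuT, hW, Finset.sum_image hinj]
    exact Finset.sum_congr rfl fun s hs => by rw [hRmT s hs]
  have habv := habove (R \ W) R (Finset.sdiff_subset)
  have hsd : R \ (R \ W) = W := by
    ext v
    simp only [Finset.mem_sdiff, not_and, not_not]
    constructor
    · rintro ⟨hvR, h2⟩; exact h2 hvR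
    · intro hv; exact ⟨hWR hv, fun _ => hv⟩
  rw [hsd] at habv
  have hmargW : ∀ v ∈ W, marg n f v (R.erase v) = f R - f (R.erase v) := by
    intro v hv
    unfold marg
    rw [Finset.insert_erase (hWR hv)]
  rw [Finset.sum_congr rfl hmargW] at habv
  rw [hCuW]
  have h0 : 0 ≤ f (R \ W) := hf0 _
  have hβ0 : (0:ℝ) ≤ β := by linarith
  calc ∑ v ∈ W, (f R - f (R.erase v)) ≤ β * (f R - f (R \ W)) := habv
    _ ≤ β * f R := by nlinarith

lemma card_filt (B : Fin K → ℕ) (k : Fin K) :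
    (Finset.univ.filter (fun s : Slot B => s.1 = k)).card = B k := by
  rw [Finset.card_filter, ← Finset.univ_sigma_univ, Finset.sum_sigma]
  have h1 : ∀ k' : Fin K,
      ∑ b : Fin (B k'), (if (⟨k', b⟩ : Slot B).1 = k then 1 else 0)
        = if k' = k then B k' else 0 := by
    intro k'
    by_cases h : k' = k
    · subst h; simp
    · simp [h]
  rw [Finset.sum_congr rfl fun k' _ => h1 k',
    Finset.sum_ite_eq' Finset.univ k (fun k' => B k')]
  simp

lemma key_pt (n B : Fin K → ℕ) (f : Finset (Elem n) → ℝ) (hmono : MonotoneSet n f)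
    (γ : ℝ) (hγ0 : 0 < γ) (hγ1 : γ ≤ 1) (hbelow : WeaklyBelow n f γ)
    (e : Choice n B) (s : Slot B) (v : Elem n) (hv : v ∉ chosen n B e Finset.univ) :
    (f (insert v (chosen n B e Finset.univ)) - f (chosen n B e Finset.univ))
        - (f (insert v (Rm n B e s)) - f (Rm n B e s))
      ≤ (1 - γ) * ((f (insert v (chosen n B e Finset.univ)) - f (chosen n B e Finset.univ))
          + (f (chosen n B e Finset.univ) - f (Rm n B e s))) := by
  set R := chosen n B e Finset.univ with hR
  rcases Rm_cases n B e s with hc | ⟨m, hm, hnot, heq⟩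
  · rw [← hc]
    have h1 : f R ≤ f (insert v R) := hmono _ _ (Finset.subset_insert _ _)
    have h2 : (0:ℝ) ≤ 1 - γ := by linarith
    nlinarith
  · set u : Elem n := ⟨s.1, m⟩ with hu
    rw [← hR] at heq
    have huR : u ∈ R := by rw [heq]; exact Finset.mem_insert_self _ _
    have huv : u ≠ v := fun hc => hv (hc ▸ huR)
    have hRm_eq : Rm n B e s = R.erase u := by rw [heq, Finset.erase_insert hnot]
    have hsub : R.erase u ⊆ insert v R :=
      (Finset.erase_subset _ _).trans (Finset.subset_insert _ _)
    have hbel := hbelow (R.erase u) (insert v R) hsub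
    have hdiff : insert v R \ R.erase u = {v, u} := by
      ext w
      simp only [Finset.mem_sdiff, Finset.mem_insert, Finset.mem_erase,
        Finset.mem_singleton, not_and]
      constructor
      · rintro ⟨hw1, hw2⟩
        rcases hw1 with h | h
        · exact Or.inl h
        · right; by_contra hne; exact (hw2 hne) h
      · rintro (h | h)
        · subst h; exact ⟨Or.inl rfl, fun _ hc => hv hc⟩
        · subst h; exact ⟨Or.inr huR, fun hc _ => hc rfl⟩
    rw [hdiff, Finset.sum_pair (huv.symm)] at hbel
    have hins : insert u (R.erase u) = R := Finset.insert_erase huR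
    have hmarg_u : marg n f u (R.erase u) = f R - f (R.erase u) := by
      unfold marg; rw [hins]
    have hmarg_v : marg n f v (R.erase u) = f (insert v (R.erase u)) - f (R.erase u) := rfl
    rw [hmarg_u, hmarg_v] at hbel
    rw [hRm_eq]
    have hmono2 : f (insert v (R.erase u)) ≤ f (insert v R) :=
      hmono _ _ (Finset.insert_subset_insert _ (Finset.erase_subset _ _))
    nlinarith [hbel]

lemma main_ineq (n B : Fin K → ℕ) (f : Finset (Elem n) → ℝ) (hf0 : ∀ S, 0 ≤ f S)
    (hmono : MonotoneSet n f) (γ : ℝ) (hγ0 : 0 < γ) (hγ1 : γ ≤ 1)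
    (hbelow : WeaklyBelow n f γ) (hB : ∀ k, 0 < B k)
    (S : Finset (Elem n)) (hS : Feasible n B S) (e : Choice n B) :
    γ ^ 2 * (f S - f (chosen n B e Finset.univ))
      ≤ YeF n B f S e + (1 - γ) * CuF n B f e := by
  classical
  set R := chosen n B e Finset.univ with hR
  set Cuk : Fin K → ℝ := fun k => ∑ s ∈ Finset.univ.filter (fun s : Slot B => s.1 = k),
    (f R - f (Rm n B e s)) with hCuk
  have hCuk_nonneg : ∀ k, 0 ≤ Cuk k := fun k =>
    Finset.sum_nonneg fun s _ => CuF_term_nonneg n B f hmono e s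
  have step3 : ∀ v ∈ S \ R,
      γ * marg n f v R
        ≤ (B v.1 : ℝ)⁻¹ * (∑ s ∈ Finset.univ.filter (fun s : Slot B => s.1 = v.1),
            marg n f v (Rm n B e s)) + (1 - γ) * ((B v.1 : ℝ)⁻¹ * Cuk v.1) := by
    intro v hv
    have hvR : v ∉ R := (Finset.mem_sdiff.1 hv).2
    have hkey : ∀ s ∈ Finset.univ.filter (fun s : Slot B => s.1 = v.1),
        marg n f v R - marg n f v (Rm n B e s)
          ≤ (1 - γ) * (marg n f v R + (f R - f (Rm n B e s))) := fun s _ =>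
      key_pt n B f hmono γ hγ0 hγ1 hbelow e s v hvR
    have hsum := Finset.sum_le_sum hkey
    rw [Finset.sum_sub_distrib, Finset.sum_const, card_filt B v.1, ← Finset.mul_sum,
      Finset.sum_add_distrib, Finset.sum_const, card_filt B v.1] at hsum
    have hpos : (0:ℝ) < (B v.1 : ℝ) := by exact_mod_cast hB v.1
    have h2 : γ * ((B v.1 : ℝ) * marg n f v R)
        ≤ (∑ s ∈ Finset.univ.filter (fun s : Slot B => s.1 = v.1),
            marg n f v (Rm n B e s)) + (1 - γ) * Cuk v.1 := by
      simp only [nsmul_eq_mul] at hsum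
      nlinarith [hsum]
    have h3 := mul_le_mul_of_nonneg_left h2 (le_of_lt (inv_pos.2 hpos))
    calc γ * marg n f v R
        = (B v.1 : ℝ)⁻¹ * (γ * ((B v.1 : ℝ) * marg n f v R)) := by field_simp
      _ ≤ (B v.1 : ℝ)⁻¹ * ((∑ s ∈ Finset.univ.filter (fun s : Slot B => s.1 = v.1),
            marg n f v (Rm n B e s)) + (1 - γ) * Cuk v.1) := h3
      _ = (B v.1 : ℝ)⁻¹ * (∑ s ∈ Finset.univ.filter (fun s : Slot B => s.1 = v.1),
            marg n f v (Rm n B e s)) + (1 - γ) * ((B v.1 : ℝ)⁻¹ * Cuk v.1) := by ring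
  have step5 : ∑ v ∈ S \ R, (B v.1 : ℝ)⁻¹
        * (∑ s ∈ Finset.univ.filter (fun s : Slot B => s.1 = v.1), marg n f v (Rm n B e s))
      ≤ YeF n B f S e := by
    unfold YeF
    apply Finset.sum_le_sum_of_subset_of_nonneg (Finset.sdiff_subset)
    intro i _ _
    apply mul_nonneg (by positivity)
    apply Finset.sum_nonneg
    intro s _
    exact sub_nonneg.2 (hmono _ _ (Finset.subset_insert _ _))
  have step6 : ∑ v ∈ S \ R, (B v.1 : ℝ)⁻¹ * Cuk v.1 ≤ CuF n B f e := by
    rw [← Finset.sum_fiberwise (S \ R) (fun v : Elem n => v.1)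
      (fun v => (B v.1 : ℝ)⁻¹ * Cuk v.1)]
    have hCuF : CuF n B f e = ∑ k : Fin K, Cuk k := by
      unfold CuF
      rw [← Finset.sum_fiberwise Finset.univ (fun s : Slot B => s.1)
        (fun s => f (chosen n B e Finset.univ) - f (Rm n B e s))]
    rw [hCuF]
    apply Finset.sum_le_sum
    intro k _
    have hcongr : ∀ v ∈ (S \ R).filter (fun v : Elem n => v.1 = k),
        (B v.1 : ℝ)⁻¹ * Cuk v.1 = (B k : ℝ)⁻¹ * Cuk k := by
      intro v hv
      rw [(Finset.mem_filter.1 hv).2]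
    rw [Finset.sum_congr rfl hcongr, Finset.sum_const, nsmul_eq_mul]
    have hcard : (((S \ R).filter (fun v : Elem n => v.1 = k)).card : ℝ) ≤ (B k : ℝ) := by
      have h1 : ((S \ R).filter (fun v : Elem n => v.1 = k)).card
          ≤ (S.filter (fun v : Elem n => v.1 = k)).card :=
        Finset.card_le_card (Finset.filter_subset_filter _ (Finset.sdiff_subset))
      have h2 := hS k
      exact_mod_cast le_trans h1 h2
    have hpos : (0:ℝ) < (B k : ℝ) := by exact_mod_cast hB k
    have hinvC : (0:ℝ) ≤ (B k : ℝ)⁻¹ * Cuk k :=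
      mul_nonneg (by positivity) (hCuk_nonneg k)
    calc (((S \ R).filter (fun v : Elem n => v.1 = k)).card : ℝ) * ((B k : ℝ)⁻¹ * Cuk k)
        ≤ (B k : ℝ) * ((B k : ℝ)⁻¹ * Cuk k) := mul_le_mul_of_nonneg_right hcard hinvC
      _ = Cuk k := by field_simp
  have hP := hbelow R (S ∪ R) Finset.subset_union_right
  rw [Finset.union_sdiff_right] at hP
  have hfs : f S ≤ f (S ∪ R) := hmono _ _ Finset.subset_union_left
  have c1 : γ ^ 2 * (f S - f R) ≤ γ ^ 2 * (f (S ∪ R) - f R) :=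
    mul_le_mul_of_nonneg_left (by linarith) (sq_nonneg γ)
  have c3 : γ * (γ * (f (S ∪ R) - f R)) ≤ γ * ∑ v ∈ S \ R, marg n f v R :=
    mul_le_mul_of_nonneg_left hP hγ0.le
  have c4 : γ * ∑ v ∈ S \ R, marg n f v R = ∑ v ∈ S \ R, γ * marg n f v R :=
    Finset.mul_sum _ _ _
  have c5 := Finset.sum_le_sum step3
  rw [Finset.sum_add_distrib] at c5
  have c6 : ∑ v ∈ S \ R, (1 - γ) * ((B v.1 : ℝ)⁻¹ * Cuk v.1)
      = (1 - γ) * ∑ v ∈ S \ R, (B v.1 : ℝ)⁻¹ * Cuk v.1 := (Finset.mul_sum _ _ _).symm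
  rw [c6] at c5
  have c7 : (1 - γ) * (∑ v ∈ S \ R, (B v.1 : ℝ)⁻¹ * Cuk v.1) ≤ (1 - γ) * CuF n B f e :=
    mul_le_mul_of_nonneg_left step6 (by linarith)
  calc γ ^ 2 * (f S - f R) ≤ γ ^ 2 * (f (S ∪ R) - f R) := c1
    _ = γ * (γ * (f (S ∪ R) - f R)) := by ring
    _ ≤ γ * ∑ v ∈ S \ R, marg n f v R := c3
    _ = ∑ v ∈ S \ R, γ * marg n f v R := c4
    _ ≤ _ := c5
    _ ≤ YeF n B f S e + (1 - γ) * CuF n B f e := by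
        apply add_le_add step5 c7

lemma indVec_simplex (n B : Fin K → ℕ) (hB : ∀ k, 0 < B k) (S : Finset (Elem n))
    (hS : Feasible n B S) : InSimplex n (indVec n B S) := by
  classical
  constructor
  · intro i
    unfold indVec
    by_cases h : i ∈ S <;> simp [h]
  · intro k
    have hterm : ∀ m : Fin (n k), indVec n B S ⟨k, m⟩
        = if (⟨k, m⟩ : Elem n) ∈ S then (B k : ℝ)⁻¹ else 0 := fun m => rfl
    rw [Finset.sum_congr rfl fun m _ => hterm m, ← Finset.sum_filter, Finset.sum_const,
      nsmul_eq_mul]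
    have hcard : (Finset.univ.filter (fun m : Fin (n k) => (⟨k, m⟩ : Elem n) ∈ S)).card
        ≤ B k := by
      have h1 : (Finset.univ.filter (fun m : Fin (n k) => (⟨k, m⟩ : Elem n) ∈ S)).card
          ≤ (S.filter (fun i : Elem n => i.1 = k)).card := by
        apply Finset.card_le_card_of_injOn (fun m => (⟨k, m⟩ : Elem n))
        · intro m hm
          rw [Finset.mem_coe, Finset.mem_filter]
          exact ⟨(Finset.mem_filter.1 hm).2, rfl⟩
        · intro m₁ _ m₂ _ hm
          have := Sigma.mk.inj_iff.1 hm
          exact eq_of_heq this.2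
      exact le_trans h1 (hS k)
    have hpos : (0:ℝ) < (B k : ℝ) := by exact_mod_cast hB k
    have hcard' : ((Finset.univ.filter (fun m : Fin (n k) => (⟨k, m⟩ : Elem n) ∈ S)).card : ℝ)
        ≤ (B k : ℝ) := by exact_mod_cast hcard
    calc ((Finset.univ.filter (fun m : Fin (n k) => (⟨k, m⟩ : Elem n) ∈ S)).card : ℝ)
          * (B k : ℝ)⁻¹
        ≤ (B k : ℝ) * (B k : ℝ)⁻¹ := mul_le_mul_of_nonneg_right hcard' (by positivity)
      _ = 1 := by field_simp

theorem multinoulliExtension_stationary_weaklySub {K : ℕ} (n B : Fin K → ℕ) (hn : ∀ k, 1 ≤ n k)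
    (hB : ∀ k, 0 < B k) (hBn : ∀ k, B k ≤ n k)
    (f : Finset (Elem n) → ℝ) (hf0 : ∀ S, 0 ≤ f S)
    (hmono : MonotoneSet n f)
    (γ β : ℝ) (hγ0 : 0 < γ) (hγ1 : γ ≤ 1) (hβ : 1 ≤ β)
    (hbelow : WeaklyBelow n f γ) (habove : WeaklyAbove n f β)
    (x : Elem n → ℝ) (hx : InSimplex n x)
    (hstat : ∀ y : Elem n → ℝ, InSimplex n y →
      inner' n (fun i => y i - x i) (grad n (ME n B f) x) ≤ 0)
    (S : Finset (Elem n)) (hS : Feasible n B S) :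
    γ ^ 2 / (β + β * (1 - γ) + γ ^ 2) * f S ≤ ME n B f x := by
  classical
  have hx0 := hx.1
  have hx1 := hx.2
  have hjp0 : ∀ e : Choice n B, 0 ≤ jointProb n B x e := jointProb_nonneg n B x hx0 hx1
  have hjp1 := sum_jointProb n B x
  have hysim := indVec_simplex n B hB S hS
  have hstat' := hstat (indVec n B S) hysim
  have hinner : inner' n (fun i => indVec n B S i - x i) (grad n (ME n B f) x)
      = (∑ i : Elem n, indVec n B S i * pderiv n (ME n B f) i x)
        - ∑ i : Elem n, x i * pderiv n (ME n B f) i x := by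
    unfold inner' grad
    rw [← Finset.sum_sub_distrib]
    exact Finset.sum_congr rfl fun i _ => by ring
  rw [hinner, xgrad_eq n B f x, ygrad_eq n B f x S] at hstat'
  set F := ME n B f x with hF
  set T := ∑ e : Choice n B, jointProb n B x e * CuF n B f e with hT
  set Y := ∑ e : Choice n B, jointProb n B x e * YeF n B f S e with hY
  have hYT : Y ≤ T := by linarith [hstat']
  have hTβ : T ≤ β * F := by
    rw [hT, hF]
    unfold ME
    rw [Finset.mul_sum]
    apply Finset.sum_le_sum
    intro e _
    calc jointProb n B x e * CuF n B f e
        ≤ jointProb n B x e * (β * f (chosen n B e Finset.univ)) :=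
          mul_le_mul_of_nonneg_left (CuF_le n B hn f hf0 hmono β hβ habove e) (hjp0 e)
      _ = β * (f (chosen n B e Finset.univ) * jointProb n B x e) := by ring
  have hmain : γ ^ 2 * f S - γ ^ 2 * F ≤ Y + (1 - γ) * T := by
    have h1 : ∀ e : Choice n B,
        jointProb n B x e * (γ ^ 2 * (f S - f (chosen n B e Finset.univ)))
          ≤ jointProb n B x e * (YeF n B f S e + (1 - γ) * CuF n B f e) := fun e =>
      mul_le_mul_of_nonneg_left (main_ineq n B f hf0 hmono γ hγ0 hγ1 hbelow hB S hS e)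
        (hjp0 e)
    have h2 := Finset.sum_le_sum (fun e (_ : e ∈ Finset.univ) => h1 e)
    have hL : ∑ e : Choice n B,
        jointProb n B x e * (γ ^ 2 * (f S - f (chosen n B e Finset.univ)))
        = γ ^ 2 * f S * (∑ e : Choice n B, jointProb n B x e) - γ ^ 2 * F := by
      rw [hF]
      unfold ME
      rw [Finset.mul_sum, Finset.mul_sum, ← Finset.sum_sub_distrib]
      exact Finset.sum_congr rfl fun e _ => by ring
    have hRt : ∑ e : Choice n B,
        jointProb n B x e * (YeF n B f S e + (1 - γ) * CuF n B f e)
        = Y + (1 - γ) * T := by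
      rw [hY, hT, Finset.mul_sum, ← Finset.sum_add_distrib]
      exact Finset.sum_congr rfl fun e _ => by ring
    rw [hL, hRt, hjp1, mul_one] at h2
    linarith
  have hprod : 0 ≤ (2 - γ) * (β * F - T) :=
    mul_nonneg (by linarith) (by linarith [hTβ])
  have hfinal : γ ^ 2 * f S ≤ (β + β * (1 - γ) + γ ^ 2) * F := by nlinarith [hmain, hYT, hprod]
  have hD : (0:ℝ) < β + β * (1 - γ) + γ ^ 2 := by nlinarith
  rw [div_mul_eq_mul_div, div_le_iff₀ hD]
  linarith [hfinal]

end Multinoulli
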